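/- Let ν ∈ ℝ with ν ≠ 0, and let ε ∈ {1, −1}. Define c := Γ(1 − iν)·Γ(iν)·e^{επν} + ln 2 + 2γ + Γ′(1 + iν)/Γ(1 + iν) + iπ/2 + i/(2ν), where γ is the Euler–Mascheroni constant and Γ′ is the complex derivative of the complex Gamma function Γ. Then Im(c) ≠ π(1 − ε)/2. -/

import Mathlib

open Complex Real

/-- The connection coefficient `c^{ν,κ}_{+,ε}` in the degenerate case `ν² = κ² ≠ 0`:
`c = Γ(1−iν)·Γ(iν)·e^{επν} + ln 2 + 2γ + Γ′(1+iν)/Γ(1+iν) + iπ/2 + i/(2ν)`,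
with `γ` the Euler–Mascheroni constant. -/
noncomputable def cDeg (ν ε : ℝ) : ℂ :=
  Complex.Gamma (1 - I * (ν : ℂ)) * Complex.Gamma (I * (ν : ℂ)) *
      (Real.exp (ε * π * ν) : ℂ) +
    (Real.log 2 : ℂ) + 2 * (Real.eulerMascheroniConstant : ℂ) +
    deriv Complex.Gamma (1 + I * (ν : ℂ)) / Complex.Gamma (1 + I * (ν : ℂ)) +
    I * (π : ℂ) / 2 + I / (2 * (ν : ℂ))

lemma sinh_ne' {t : ℝ} (ht : t ≠ 0) : Real.sinh (π * t) ≠ 0 :=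
  Real.sinh_ne_zero.2 (mul_ne_zero Real.pi_ne_zero ht)

/-- Reflection: Γ(iν)Γ(1−iν) = −iπ/sinh(πν). -/
lemma gamma_refl (t : ℝ) (ht : t ≠ 0) :
    Complex.Gamma (I * t) * Complex.Gamma (1 - I * t) =
      -I * π / (Real.sinh (π * t) : ℂ) := by
  have h := Complex.Gamma_mul_Gamma_one_sub (I * (t : ℂ))
  have harg : (π : ℂ) * (I * t) = ((π * t : ℝ) : ℂ) * I := by push_cast; ring
  rw [harg, Complex.sin_mul_I, ← Complex.ofReal_sinh] at h
  rw [h]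
  have h0 : (Real.sinh (π * t) : ℂ) ≠ 0 := by
    exact_mod_cast Complex.ofReal_ne_zero.2 (sinh_ne' ht)
  rw [div_eq_div_iff (by exact mul_ne_zero h0 Complex.I_ne_zero) h0]
  linear_combination (π : ℂ) * (Real.sinh (π * t) : ℂ) * Complex.I_sq

/-- The product Γ(1+it)·conj Γ(1+it) = πt/sinh(πt) for t ≠ 0. -/
lemma gamma_normSq (t : ℝ) (ht : t ≠ 0) :
    Complex.Gamma (1 + I * t) * star (Complex.Gamma (1 + I * t)) =
      ((π * t / Real.sinh (π * t) : ℝ) : ℂ) := by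
  have hconj : star (Complex.Gamma (1 + I * (t:ℂ))) = Complex.Gamma (1 - I * t) := by
    have hc : (starRingEnd ℂ) (1 + I * (t:ℂ)) = 1 - I * t := by
      simp [map_add, map_mul, Complex.conj_I, Complex.conj_ofReal]
      ring
    rw [← hc, Complex.Gamma_conj]
    rfl
  rw [hconj]
  have hIt : (I : ℂ) * t ≠ 0 := by
    simp [Complex.ext_iff, ht]
  have h1 : Complex.Gamma (1 + I * t) = I * t * Complex.Gamma (I * t) := by
    rw [add_comm, Complex.Gamma_add_one _ hIt]
  rw [h1, mul_assoc, gamma_refl t ht]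
  have h0 : (Real.sinh (π * t) : ℂ) ≠ 0 :=
    Complex.ofReal_ne_zero.2 (sinh_ne' ht)
  rw [Complex.ofReal_div, Complex.ofReal_mul, ← mul_div_assoc,
    div_eq_div_iff h0 h0]
  linear_combination (-(π : ℂ) * t * (Real.sinh (π * t) : ℂ)) * Complex.I_sq

lemma not_neg_nat (ν : ℝ) (hν : ν ≠ 0) : ∀ m : ℕ, (1 + I * (ν : ℂ)) ≠ -m := by
  intro m h
  apply hν
  have := congrArg Complex.im h
  simpa using this

/-- Imaginary part of digamma at 1+iν. -/
lemma im_digamma (ν : ℝ) (hν : ν ≠ 0) :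
    (deriv Complex.Gamma (1 + I * ν) / Complex.Gamma (1 + I * ν)).im =
      π * Real.cosh (π * ν) / (2 * Real.sinh (π * ν)) - 1 / (2 * ν) := by
  have hne := not_neg_nat ν hν
  set A := Complex.Gamma (1 + I * (ν:ℂ)) with hAdef
  set G' := deriv Complex.Gamma (1 + I * (ν:ℂ)) with hG'def
  have hA : A ≠ 0 := Complex.Gamma_ne_zero hne
  -- derivative of t ↦ Γ(1+it)
  have h1 : HasDerivAt Complex.Gamma G' (1 + I * ν) :=
    (Complex.differentiableAt_Gamma _ hne).hasDerivAt
  have h2 : HasDerivAt (fun z : ℂ => 1 + I * z) I (ν:ℂ) := by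
    simpa using ((hasDerivAt_id (ν:ℂ)).const_mul I).const_add (1:ℂ)
  have h3 : HasDerivAt (fun z : ℂ => Complex.Gamma (1 + I * z)) (G' * I) (ν:ℂ) :=
    HasDerivAt.comp (ν:ℂ) h1 h2
  have hd : HasDerivAt (fun t : ℝ => Complex.Gamma (1 + I * t)) (G' * I) ν :=
    h3.comp_ofReal
  have hstar : HasDerivAt (fun t : ℝ => star (Complex.Gamma (1 + I * t)))
      (star (G' * I)) ν := hd.star
  have hprod : HasDerivAt
      (fun t : ℝ => Complex.Gamma (1 + I * t) * star (Complex.Gamma (1 + I * t)))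
      (G' * I * star A + A * star (G' * I)) ν := hd.mul hstar
  -- derivative of the real function
  set S := Real.sinh (π * ν) with hSdef
  set C := Real.cosh (π * ν) with hCdef
  have hS : S ≠ 0 := sinh_ne' hν
  set r' : ℝ := (π * S - π * ν * (C * π)) / S ^ 2 with hr'def
  have hnum : HasDerivAt (fun t : ℝ => π * t) π ν := by
    simpa using (hasDerivAt_id ν).const_mul π
  have hden : HasDerivAt (fun t : ℝ => Real.sinh (π * t)) (C * π) ν := by
    have := (Real.hasDerivAt_sinh (π * ν)).comp ν ((hasDerivAt_id ν).const_mul π)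
    exact this.congr_deriv (by simp [hCdef])
  have hr : HasDerivAt (fun t : ℝ => π * t / Real.sinh (π * t)) r' ν :=
    hnum.div hden hS
  have hrC : HasDerivAt (fun t : ℝ => ((π * t / Real.sinh (π * t) : ℝ) : ℂ))
      ((r' : ℝ) : ℂ) ν := hr.ofReal_comp
  -- the two functions agree near ν
  have heq : (fun t : ℝ => Complex.Gamma (1 + I * t) * star (Complex.Gamma (1 + I * t)))
      =ᶠ[nhds ν] (fun t : ℝ => ((π * t / Real.sinh (π * t) : ℝ) : ℂ)) := by
    filter_upwards [isOpen_compl_singleton.mem_nhds (by simpa using hν : ν ∈ ({0}ᶜ : Set ℝ))]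
      with t ht
    exact gamma_normSq t ht
  have hd2 : HasDerivAt
      (fun t : ℝ => Complex.Gamma (1 + I * t) * star (Complex.Gamma (1 + I * t)))
      ((r' : ℝ) : ℂ) ν := hrC.congr_of_eventuallyEq heq
  have hkey : G' * I * star A + A * star (G' * I) = ((r' : ℝ) : ℂ) :=
    hprod.unique hd2
  -- extract imaginary part of w := G' * star A
  set w := G' * star A with hwdef
  have hws : A * star (G' * I) = star (w * I) := by
    simp [hwdef, star_mul, mul_comm, mul_assoc, mul_left_comm]
  have hre : 2 * (w * I).re = r' := by
    have h := congrArg Complex.re hkey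
    rw [hws] at h
    have h4 : G' * I * star A = w * I := by rw [hwdef]; ring
    rw [h4] at h
    have h5 : w * I + star (w * I) = ((2 * (w * I).re : ℝ) : ℂ) := by
      rw [← Complex.add_conj]
      rfl
    rw [h5] at h
    simpa using h
  have hwim : w.im = -r' / 2 := by
    have : (w * I).re = -w.im := by simp [Complex.mul_re]
    rw [this] at hre; linarith
  -- Γ'/Γ in terms of w
  have hAA : A * star A = ((π * ν / S : ℝ) : ℂ) := gamma_normSq ν hν
  have hgr : (π * ν / S : ℝ) ≠ 0 :=
    div_ne_zero (mul_ne_zero Real.pi_ne_zero hν) hS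
  have hA' : star A ≠ 0 := star_ne_zero.2 hA
  have hdiv : G' / A = w * (((π * ν / S : ℝ) : ℂ))⁻¹ := by
    rw [← hAA, hwdef]
    calc G' / A = G' * A⁻¹ * (star A * (star A)⁻¹) := by
          rw [mul_inv_cancel₀ hA', mul_one, div_eq_mul_inv]
      _ = G' * star A * (A * star A)⁻¹ := by rw [mul_inv]; ring
  rw [hdiv]
  have : (w * (((π * ν / S : ℝ) : ℂ))⁻¹).im = w.im * (π * ν / S)⁻¹ := by
    rw [← Complex.ofReal_inv, Complex.mul_im, Complex.ofReal_im, Complex.ofReal_re,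
      mul_zero, zero_add]
  rw [this, hwim, hr'def]
  field_simp
  ring


/-- For real `ν ≠ 0` and `ε = ±1`, `Im(c^{ν,κ}_{+,ε}) ≠ π(1 − ε)/2`. -/
theorem cDeg_im_ne (ν : ℝ) (hν : ν ≠ 0) (ε : ℝ) (hε : ε = 1 ∨ ε = -1) :
    (cDeg ν ε).im ≠ π * (1 - ε) / 2 := by
  set S := Real.sinh (π * ν) with hSdef
  set C := Real.cosh (π * ν) with hCdef
  have hS : S ≠ 0 := sinh_ne' hν
  have hrefl : Complex.Gamma (1 - I * ν) * Complex.Gamma (I * ν) =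
      -I * π / (S : ℂ) := by
    rw [mul_comm]; exact gamma_refl ν hν
  have him1 : (Complex.Gamma (1 - I * ν) * Complex.Gamma (I * ν) *
      (Real.exp (ε * π * ν) : ℂ)).im = -π / S * Real.exp (ε * π * ν) := by
    rw [hrefl]
    have h2 : -I * (π:ℂ) / (S : ℂ) * (Real.exp (ε * π * ν) : ℂ) =
        ((-π / S * Real.exp (ε * π * ν) : ℝ) : ℂ) * I := by
      push_cast; ring
    rw [h2, Complex.mul_im, Complex.ofReal_re, Complex.ofReal_im, Complex.I_im,
      Complex.I_re, mul_one, zero_mul, add_zero]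
  have him2 : (I / (2 * (ν:ℂ))).im = 1 / (2 * ν) := by
    have : (I / (2 * (ν:ℂ))) = ((1 / (2 * ν) : ℝ) : ℂ) * I := by
      push_cast
      field_simp
    rw [this, Complex.mul_im, Complex.ofReal_re, Complex.ofReal_im, Complex.I_im,
      Complex.I_re, mul_one, zero_mul, add_zero]
  have him3 : (I * (π:ℂ) / 2).im = π / 2 := by
    have h2 : I * (π:ℂ) / 2 = ((π / 2 : ℝ) : ℂ) * I := by push_cast; ring
    rw [h2, Complex.mul_im, Complex.ofReal_re, Complex.ofReal_im, Complex.I_im,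
      Complex.I_re, mul_one, zero_mul, add_zero]
  have him4 : ((2:ℂ) * (Real.eulerMascheroniConstant : ℂ)).im = 0 := by
    simp
  have hcim : (cDeg ν ε).im =
      -π / S * Real.exp (ε * π * ν) +
        (π * C / (2 * S) - 1 / (2 * ν)) + π / 2 + 1 / (2 * ν) := by
    rw [cDeg]
    rw [Complex.add_im, Complex.add_im, Complex.add_im, Complex.add_im, Complex.add_im,
      him1, him2, him3, him4, im_digamma ν hν, Complex.ofReal_im]
    ring
  rw [hcim]
  rcases hε with rfl | rfl
  · intro h
    have hE : C + S = Real.exp (π * ν) := Real.cosh_add_sinh (π * ν)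
    have hEpos : 0 < Real.exp (π * ν) := Real.exp_pos _
    rw [show (1:ℝ) * π * ν = π * ν by ring] at h
    have : -π / S * Real.exp (π * ν) + (π * C / (2 * S) - 1 / (2 * ν)) + π / 2 + 1 / (2 * ν)
        = -π * Real.exp (π * ν) / (2 * S) := by
      rw [← hE]
      field_simp
      ring
    rw [this] at h
    have : π * (1 - 1) / 2 = 0 := by ring
    rw [this] at h
    have := div_eq_zero_iff.1 h
    rcases this with h' | h'
    · nlinarith [Real.pi_pos]
    · exact absurd h' (by positivity)
  · intro h
    have hE : C - S = Real.exp (-(π * ν)) := Real.cosh_sub_sinh (π * ν)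
    have hEpos : 0 < Real.exp (-(π * ν)) := Real.exp_pos _
    rw [show (-1:ℝ) * π * ν = -(π * ν) by ring] at h
    have hgoal : -π / S * Real.exp (-(π * ν)) + (π * C / (2 * S) - 1 / (2 * ν)) + π / 2 + 1 / (2 * ν)
        - π * (1 - (-1)) / 2 = -π * Real.exp (-(π * ν)) / (2 * S) := by
      rw [← hE]
      field_simp
      ring
    have h0 : -π * Real.exp (-(π * ν)) / (2 * S) = 0 := by
      rw [← hgoal, h]; ring
    have := div_eq_zero_iff.1 h0
    rcases this with h' | h'
    · nlinarith [Real.pi_pos]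
    · exact absurd h' (by positivity)
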